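/- Let D₀ = [[1,2],[0,0]] and D₁ = [[1,2],[1,0]], and let M = D₀⊗D₀ + D₁⊗D₁ = [[2,4,4,8],[1,0,2,0],[1,2,0,0],[1,0,0,0]]. Then the characteristic polynomial of M equals (X+2)(X³−4X²−12X+16); consequently the largest real eigenvalue ξ of (1/2)M satisfies ξ³ − 2ξ² − 3ξ + 2 = 0 and lies in the interval (2.81, 2.82). -/

import Mathlib

open Matrix Kronecker Polynomial

/-- The transfer matrices for counting odd coefficients of `(1+x+x²)^n`. -/
noncomputable def triD0 : Matrix (Fin 2) (Fin 2) ℝ := !![1, 2; 0, 0]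

noncomputable def triD1 : Matrix (Fin 2) (Fin 2) ℝ := !![1, 2; 1, 0]

/-- The 4×4 matrix `M = D₀⊗D₀ + D₁⊗D₁`, written with rows and columns indexed by `Fin 4`
in the usual (row-major) order. -/
noncomputable def triKron : Matrix (Fin 4) (Fin 4) ℝ :=
  Matrix.reindex finProdFinEquiv finProdFinEquiv (triD0 ⊗ₖ triD0 + triD1 ⊗ₖ triD1)

lemma detFin4 {R : Type*} [CommRing R] (a b c d e f g h i j k l m n o p : R) :
    Matrix.det !![a,b,c,d; e,f,g,h; i,j,k,l; m,n,o,p] =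
      a*(f*(k*p-l*o)-g*(j*p-l*n)+h*(j*o-k*n))
      - b*(e*(k*p-l*o)-g*(i*p-l*m)+h*(i*o-k*m))
      + c*(e*(j*p-l*n)-f*(i*p-l*m)+h*(i*n-j*m))
      - d*(e*(j*o-k*n)-f*(i*o-k*m)+g*(i*n-j*m)) := by
  have h1 : Fin.succAbove (2:Fin 4) (2:Fin 3) = 3 := by decide
  have h2 : Fin.succAbove (1:Fin 4) (2:Fin 3) = 3 := by decide
  have h3 : Fin.castSucc (2:Fin 3) = (2:Fin 4) := by decide
  have h4 : Fin.succAbove (3:Fin 4) (2:Fin 3) = 2 := by decide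
  simp [Matrix.det_succ_row_zero, Fin.sum_univ_succ, h1, h2, h3, h4]
  ring

lemma triKron_eq : triKron = !![2, 4, 4, 8; 1, 0, 2, 0; 1, 2, 0, 0; 1, 0, 0, 0] := by
  ext i j
  fin_cases i <;> fin_cases j <;>
    simp [triKron, triD0, triD1, finProdFinEquiv, Fin.divNat, Fin.modNat,
      Matrix.vecHead, Matrix.vecTail, show ((3:Fin 4):ℕ) = 3 from rfl] <;> norm_num

/-- `M = D₀⊗D₀ + D₁⊗D₁ = [[2,4,4,8],[1,0,2,0],[1,2,0,0],[1,0,0,0]]`, its characteristic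
polynomial is `(X+2)(X³−4X²−12X+16)`, and the largest real eigenvalue `ξ` of `(1/2)M`
satisfies `ξ³−2ξ²−3ξ+2 = 0` and `2.81 < ξ < 2.82`. -/
theorem trinomial_kronecker_charpoly :
    triKron = !![2, 4, 4, 8; 1, 0, 2, 0; 1, 2, 0, 0; 1, 0, 0, 0] ∧
    triKron.charpoly = (X + 2) * (X ^ 3 - 4 * X ^ 2 - 12 * X + 16) ∧
    ∃ ξ : ℝ, ξ ∈ spectrum ℝ ((1 / 2 : ℝ) • triKron) ∧
      (∀ μ ∈ spectrum ℝ ((1 / 2 : ℝ) • triKron), μ ≤ ξ) ∧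
      ξ ^ 3 - 2 * ξ ^ 2 - 3 * ξ + 2 = 0 ∧ 2.81 < ξ ∧ ξ < 2.82 := by
  refine ⟨triKron_eq, ?_, ?_⟩
  · rw [Matrix.charpoly, triKron_eq]
    have hc : charmatrix (!![2, 4, 4, 8; 1, 0, 2, 0; 1, 2, 0, 0; 1, 0, 0, 0] :
        Matrix (Fin 4) (Fin 4) ℝ) =
        !![X - 2, -4, -4, -8; -1, X, -2, 0; -1, -2, X, 0; -1, 0, 0, X] := by
      ext i j
      fin_cases i <;> fin_cases j <;>
        simp [charmatrix_apply_eq, charmatrix_apply_ne, map_ofNat, Matrix.vecHead, Matrix.vecTail] <;> norm_num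
    rw [hc, detFin4]
    ring
  · -- spectrum analysis
    have key : ∀ μ : ℝ, μ ∈ spectrum ℝ ((1 / 2 : ℝ) • triKron) ↔
        (μ + 1) * (μ ^ 3 - 2 * μ ^ 2 - 3 * μ + 2) = 0 := by
      intro μ
      rw [spectrum.mem_iff, Matrix.isUnit_iff_isUnit_det, isUnit_iff_ne_zero, not_ne_iff]
      have hmat : algebraMap ℝ (Matrix (Fin 4) (Fin 4) ℝ) μ - (1 / 2 : ℝ) • triKron =
          !![μ - 1, -2, -2, -4; -(1/2), μ, -1, 0; -(1/2), -1, μ, 0; -(1/2), 0, 0, μ] := by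
        rw [triKron_eq]
        ext i j
        fin_cases i <;> fin_cases j <;>
          simp [Matrix.algebraMap_matrix_apply, Matrix.vecHead, Matrix.vecTail] <;> norm_num
      rw [hmat, detFin4]
      constructor <;> intro h <;> nlinarith [h]
    obtain ⟨ξ, hξmem, hξroot⟩ : ∃ ξ ∈ Set.Ioo (2.81 : ℝ) 2.82,
        ξ ^ 3 - 2 * ξ ^ 2 - 3 * ξ + 2 = 0 := by
      have hcont : ContinuousOn (fun x : ℝ => x ^ 3 - 2 * x ^ 2 - 3 * x + 2)
          (Set.Icc 2.81 2.82) := by fun_prop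
      have h0 : (0 : ℝ) ∈ Set.Ioo ((fun x : ℝ => x ^ 3 - 2 * x ^ 2 - 3 * x + 2) 2.81)
          ((fun x : ℝ => x ^ 3 - 2 * x ^ 2 - 3 * x + 2) 2.82) := by
        constructor <;> norm_num
      have := intermediate_value_Ioo (by norm_num : (2.81 : ℝ) ≤ 2.82) hcont h0
      obtain ⟨ξ, hmem, hval⟩ := this
      exact ⟨ξ, hmem, hval⟩
    obtain ⟨h1, h2⟩ := hξmem
    refine ⟨ξ, ?_, ?_, hξroot, h1, h2⟩
    · rw [key]; rw [hξroot]; ring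
    · intro μ hμ
      rw [key] at hμ
      rcases mul_eq_zero.1 hμ with h | h
      · nlinarith
      · by_contra hgt
        push_neg at hgt
        have hQ : 0 < μ * (μ - 2) + ξ * (ξ - 2) + (μ * ξ - 3) := by
          nlinarith [mul_pos (show (0:ℝ) < μ by linarith) (show (0:ℝ) < μ - 2 by linarith),
            mul_pos (show (0:ℝ) < ξ by linarith) (show (0:ℝ) < ξ - 2 by linarith),
            mul_pos (show (0:ℝ) < μ - 2.81 by linarith) (show (0:ℝ) < ξ - 2.81 by linarith)]
        have hP := mul_pos (sub_pos.2 hgt) hQ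
        nlinarith [hP, h, hξroot]
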